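/- arXiv:1601.02003 — 2 statements merged into one kernel-verified Lean document; each statement's English description precedes it below -/
import Mathlib

section
/- Fix 0 < q < 1 and consider the Markov chain M_n = max(M_{n-1}, Z_n) - 1 driven by i.i.d. Geometric(1-q) variables. There exist positive constants A = A(q) and c = c(q) such that for all integers t ≥ 0 and all real s ≥ 0, P_t(R_0^+ > 10t + s) ≤ A e^{-cs}, where R_0^+ = min{k > 0 : M_k = 0}. More generally, for every integer v ≥ 0, P_{t+v}(R_v^+ > 10t + s) ≤ A e^{-cs}, where R_v^+ = min{k > 0 : M_k ≤ v} is the first return time to or below v. -/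
open MeasureTheory
open scoped ENNReal

noncomputable section

/-- The chain `M_0 = m0`, `M_n = max (M_{n-1}, Z_n) - 1`. -/
def chainM (m0 : ℕ) (z : ℕ → ℕ) : ℕ → ℕ
  | 0 => m0
  | n + 1 => max (chainM m0 z n) (z (n + 1)) - 1

/-- The first return time to `0`, `R_0^+ = min {k > 0 : M_k = 0}`, of a trajectory `M`,
as an element of `ℝ≥0∞` (equal to `∞` if the chain never returns to `0`). -/
noncomputable def retTimeZero (M : ℕ → ℕ) : ℝ≥0∞ :=
  ⨅ (k : ℕ) (_ : 0 < k ∧ M k = 0), (k : ℝ≥0∞)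

/-- The first time `R_v^+ = min {k > 0 : M_k ≤ v}` the trajectory `M` reaches level `v`
or below, as an element of `ℝ≥0∞` (equal to `∞` if this never happens). -/
noncomputable def retTimeLe (M : ℕ → ℕ) (v : ℕ) : ℝ≥0∞ :=
  ⨅ (k : ℕ) (_ : 0 < k ∧ M k ≤ v), (k : ℝ≥0∞)

set_option linter.unusedSectionVars false

namespace RTETaux

lemma chainM_le_iff (m : ℕ) (z : ℕ → ℕ) :
    ∀ k v, chainM m z k ≤ v ↔ m ≤ v + k ∧ ∀ j, 1 ≤ j → j ≤ k → z j ≤ v + (k - j) + 1 := by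
  intro k
  induction k with
  | zero =>
    intro v
    constructor
    · intro h; exact ⟨by simpa [chainM] using h, by omega⟩
    · intro ⟨h, _⟩; simpa [chainM] using h
  | succ k ih =>
    intro v
    have hstep : chainM m z (k+1) ≤ v ↔ chainM m z k ≤ v + 1 ∧ z (k+1) ≤ v + 1 := by
      show max (chainM m z k) (z (k+1)) - 1 ≤ v ↔ _
      omega
    rw [hstep, ih (v+1)]
    constructor
    · rintro ⟨⟨h1, h2⟩, h3⟩
      refine ⟨by omega, ?_⟩
      intro j hj1 hj2
      rcases Nat.lt_or_ge j (k+1) with h | h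
      · have := h2 j hj1 (by omega); omega
      · have hj : j = k + 1 := by omega
        subst hj; omega
    · rintro ⟨h1, h2⟩
      refine ⟨⟨by omega, ?_⟩, ?_⟩
      · intro j hj1 hj2
        have := h2 j hj1 (by omega); omega
      · have := h2 (k+1) (by omega) (by omega); omega

lemma measurableSet_pi_nat {ι : Type*} [Finite ι] (s : Set (ι → ℕ)) :
    MeasurableSet s := by
  have hsing : ∀ f : ι → ℕ, MeasurableSet ({f} : Set (ι → ℕ)) := by
    intro f
    have h : ({f} : Set (ι → ℕ)) = ⋂ i, (fun g : ι → ℕ => g i) ⁻¹' {f i} := by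
      ext g
      simp [funext_iff, eq_comm]
    rw [h]
    exact MeasurableSet.iInter fun i => (measurable_pi_apply i) (measurableSet_singleton (f i))
  rw [← Set.biUnion_of_singleton s]
  exact MeasurableSet.biUnion (Set.to_countable s) fun f _ => hsing f

variable {Ω : Type*} [MeasurableSpace Ω] {P : Measure Ω} [IsProbabilityMeasure P]
  {q : ℝ} {Z : ℕ → Ω → ℕ}

def depOn (Z : ℕ → Ω → ℕ) (S : Finset ℕ) (U : Set Ω) : Prop :=
  ∀ ⦃ω ω'⦄, (∀ j ∈ S, Z j ω = Z j ω') → ω ∈ U → ω' ∈ U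

lemma depOn.eq_preimage {S : Finset ℕ} {U : Set Ω} (h : depOn Z S U) :
    U = (fun ω (j : S) => Z j ω) ⁻¹' ((fun ω (j : S) => Z j ω) '' U) := by
  ext ω'
  constructor
  · intro hω'
    exact ⟨ω', hω', rfl⟩
  · rintro ⟨ω, hω, heq⟩
    exact h (fun j hj => congrFun heq ⟨j, hj⟩) hω

lemma depOn_mono {S S' : Finset ℕ} {U : Set Ω} (hSS : S ⊆ S') (h : depOn Z S U) :
    depOn Z S' U :=
  fun _ _ hh => h fun j hj => hh j (hSS hj)

lemma indep_of_depOn (hindep : ProbabilityTheory.iIndepFun Z P)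
    (hmeas : ∀ i, Measurable (Z i)) {S T : Finset ℕ} (hST : Disjoint S T)
    {U V : Set Ω} (hU : depOn Z S U) (hV : depOn Z T V) :
    P (U ∩ V) = P U * P V := by
  nth_rewrite 1 [hU.eq_preimage, hV.eq_preimage]
  rw [(hindep.indepFun_finset S T hST hmeas).measure_inter_preimage_eq_mul _ _
    (measurableSet_pi_nat _) (measurableSet_pi_nat _)]
  rw [← hU.eq_preimage, ← hV.eq_preimage]

lemma tail_eq (hq0 : 0 < q) (hq1 : q < 1) (hmeas : ∀ i, Measurable (Z i))
    (hgeom : ∀ i k, 1 ≤ k →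
      P {ω | Z i ω = k} = ENNReal.ofReal ((1 - q) * q ^ (k - 1)))
    (i m : ℕ) (hm : 1 ≤ m) :
    P {ω | m ≤ Z i ω} = ENNReal.ofReal (q ^ (m - 1)) := by
  have hset : {ω | m ≤ Z i ω} = ⋃ n : ℕ, {ω | Z i ω = m + n} := by
    ext ω
    simp only [Set.mem_setOf_eq, Set.mem_iUnion]
    constructor
    · intro h; exact ⟨Z i ω - m, by omega⟩
    · rintro ⟨n, hn⟩; omega
  have hdisj : Pairwise (Function.onFun Disjoint fun n => {ω | Z i ω = m + n}) := by
    intro a b hab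
    rw [Function.onFun, Set.disjoint_left]
    intro ω h1 h2
    simp only [Set.mem_setOf_eq] at h1 h2
    omega
  have hms : ∀ n, MeasurableSet {ω | Z i ω = m + n} :=
    fun n => (hmeas i) (measurableSet_singleton (m + n))
  rw [hset, measure_iUnion hdisj hms]
  have hterm : ∀ n, P {ω | Z i ω = m + n}
      = ENNReal.ofReal (((1 - q) * q ^ (m - 1)) * q ^ n) := by
    intro n
    rw [hgeom i (m + n) (by omega)]
    congr 1
    have h : m + n - 1 = (m - 1) + n := by omega
    rw [h, pow_add]; ring
  simp_rw [hterm]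
  have hsummable : Summable (fun n : ℕ => ((1 - q) * q ^ (m - 1)) * q ^ n) :=
    (summable_geometric_of_lt_one hq0.le hq1).mul_left _
  rw [← ENNReal.ofReal_tsum_of_nonneg (fun n => mul_nonneg (mul_nonneg (by linarith) (pow_nonneg hq0.le _)) (pow_nonneg hq0.le _)) hsummable]
  congr 1
  rw [tsum_mul_left, tsum_geometric_of_lt_one hq0.le hq1]
  have h1q : (1 : ℝ) - q ≠ 0 := by intro h; nlinarith
  field_simp

lemma le_tail (hq0 : 0 < q) (hq1 : q < 1) (hmeas : ∀ i, Measurable (Z i))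
    (hgeom : ∀ i k, 1 ≤ k →
      P {ω | Z i ω = k} = ENNReal.ofReal ((1 - q) * q ^ (k - 1)))
    (i x : ℕ) :
    P {ω | Z i ω ≤ x} = ENNReal.ofReal (1 - q ^ x) := by
  have hc : {ω | Z i ω ≤ x}ᶜ = {ω | x + 1 ≤ Z i ω} := by
    ext ω
    simp only [Set.mem_compl_iff, Set.mem_setOf_eq]
    omega
  have hms : MeasurableSet {ω | Z i ω ≤ x} := (hmeas i) measurableSet_Iic
  have h1 := measure_compl hms (measure_ne_top P _)
  rw [hc, tail_eq hq0 hq1 hmeas hgeom i (x+1) (by omega)] at h1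
  simp only [Nat.add_sub_cancel, measure_univ] at h1
  have h2 : P {ω | Z i ω ≤ x} = 1 - ENNReal.ofReal (q ^ x) := by
    rw [h1, ENNReal.sub_sub_cancel ENNReal.one_ne_top prob_le_one]
  rw [h2, ← ENNReal.ofReal_one, ← ENNReal.ofReal_sub _ (by positivity)]

set_option linter.unusedSectionVars false

lemma one_sub_pow_ge (hq0 : 0 < q) (hq1 : q < 1) {y : ℝ} (hy0 : 0 < y) (hyq : y ≤ q) :
    Real.exp (-(y / (1 - q))) ≤ 1 - y := by
  have h1q : (0:ℝ) < 1 - q := by linarith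
  have hE := Real.add_one_le_exp (y / (1 - q))
  rw [Real.exp_neg, inv_eq_one_div, div_le_iff₀ (Real.exp_pos _)]
  have key : (1:ℝ) ≤ (1 - y) * (y / (1 - q) + 1) := by
    rw [← sub_nonneg]
    have h : (1 - y) * (y / (1 - q) + 1) - 1 = y * (q - y) / (1 - q) := by
      field_simp; ring
    rw [h]
    exact div_nonneg (mul_nonneg hy0.le (by linarith)) h1q.le
  calc (1:ℝ) ≤ (1 - y) * (y / (1 - q) + 1) := key
    _ ≤ (1 - y) * Real.exp (y / (1 - q)) :=
        mul_le_mul_of_nonneg_left hE (by linarith)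

lemma sum_pow_sub_le (hq0 : 0 < q) (hq1 : q < 1) (S : Finset ℕ) (c : ℕ)
    (hS : ∀ j ∈ S, j ≤ c) :
    ∑ j ∈ S, q ^ (c - j) ≤ 1 / (1 - q) := by
  classical
  have hinj : ∀ x ∈ S, ∀ y ∈ S, c - x = c - y → x = y := by
    intro a ha b hb hab
    have := hS a ha; have := hS b hb; omega
  have h1 : ∑ j ∈ S, q ^ (c - j) = ∑ d ∈ S.image (fun j => c - j), q ^ d :=
    (Finset.sum_image hinj).symm
  rw [h1]
  have hsub : S.image (fun j => c - j) ⊆ Finset.range (c + 1) := by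
    intro d hd
    simp only [Finset.mem_image] at hd
    obtain ⟨j, hj, rfl⟩ := hd
    simp only [Finset.mem_range]
    omega
  calc ∑ d ∈ S.image (fun j => c - j), q ^ d
      ≤ ∑ d ∈ Finset.range (c + 1), q ^ d :=
        Finset.sum_le_sum_of_subset_of_nonneg hsub
          (fun d _ _ => pow_nonneg hq0.le d)
    _ ≤ ∑' d : ℕ, q ^ d :=
        Summable.sum_le_tsum _ (fun d _ => pow_nonneg hq0.le d)
          (summable_geometric_of_lt_one hq0.le hq1)
    _ = (1 - q)⁻¹ := tsum_geometric_of_lt_one hq0.le hq1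
    _ = 1 / (1 - q) := (one_div _).symm

/-- The union event `∃ j ∈ S, Z j ≥ v + (c - j) + 2`. -/
def Uev (Z : ℕ → Ω → ℕ) (v c : ℕ) (S : Finset ℕ) : Set Ω :=
  ⋃ j ∈ S, {ω | v + (c - j) + 2 ≤ Z j ω}

def Gev (Z : ℕ → Ω → ℕ) (v t L r : ℕ) : Set Ω :=
  ⋂ i ∈ Finset.Icc 1 r, Uev Z v (t + i * L) (Finset.Icc 1 (t + i * L))

lemma measurableSet_Uev (hmeas : ∀ i, Measurable (Z i)) (v c : ℕ) (S : Finset ℕ) :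
    MeasurableSet (Uev Z v c S) :=
  Set.Finite.measurableSet_biUnion (S.finite_toSet)
    (fun j _ => (hmeas j) measurableSet_Ici)

lemma depOn_Uev (v c : ℕ) (S : Finset ℕ) : depOn Z S (Uev Z v c S) := by
  intro ω ω' h hω
  simp only [Uev, Set.mem_iUnion] at hω ⊢
  obtain ⟨j, hj, hZ⟩ := hω
  refine ⟨j, hj, ?_⟩
  rw [Set.mem_setOf_eq, ← h j hj]
  exact hZ

lemma Gev_anti (v t L : ℕ) {r r' : ℕ} (h : r ≤ r') :
    Gev Z v t L r' ⊆ Gev Z v t L r := by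
  intro ω hω
  simp only [Gev, Set.mem_iInter] at hω ⊢
  intro i hi
  refine hω i ?_
  simp only [Finset.mem_Icc] at hi ⊢
  omega

lemma depOn_Gev (v t L r : ℕ) :
    depOn Z (Finset.Icc 1 (t + r * L)) (Gev Z v t L r) := by
  intro ω ω' h hω
  simp only [Gev, Set.mem_iInter] at hω ⊢
  intro i hi
  have hir : i ≤ r := (Finset.mem_Icc.mp hi).2
  have hsub : Finset.Icc 1 (t + i * L) ⊆ Finset.Icc 1 (t + r * L) :=
    Finset.Icc_subset_Icc_right (Nat.add_le_add_left (Nat.mul_le_mul_right _ hir) t)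
  exact depOn_mono hsub (depOn_Uev v (t + i * L) (Finset.Icc 1 (t + i * L))) h (hω i hi)

lemma Uev_sum_le (hq0 : 0 < q) (hq1 : q < 1) (hmeas : ∀ i, Measurable (Z i))
    (hgeom : ∀ i k, 1 ≤ k →
      P {ω | Z i ω = k} = ENNReal.ofReal ((1 - q) * q ^ (k - 1)))
    (v c : ℕ) (S : Finset ℕ) :
    P (Uev Z v c S) ≤ ENNReal.ofReal (∑ j ∈ S, q ^ (v + (c - j) + 1)) := by
  calc P (Uev Z v c S) ≤ ∑ j ∈ S, P {ω | v + (c - j) + 2 ≤ Z j ω} :=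
        measure_biUnion_finset_le S _
    _ = ∑ j ∈ S, ENNReal.ofReal (q ^ (v + (c - j) + 1)) := by
        refine Finset.sum_congr rfl fun j _ => ?_
        rw [tail_eq hq0 hq1 hmeas hgeom j (v + (c - j) + 2) (by omega)]
        norm_num
    _ = ENNReal.ofReal (∑ j ∈ S, q ^ (v + (c - j) + 1)) :=
        (ENNReal.ofReal_sum_of_nonneg (fun j _ => pow_nonneg hq0.le _)).symm

/-- Complement/product bound for a block: the probability that some `Z j`, `j` in the
block `(a, a+n]`, exceeds the threshold is at most `1 - exp(-q/(1-q)^2)`. -/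
lemma Uev_block_le (hq0 : 0 < q) (hq1 : q < 1) (hmeas : ∀ i, Measurable (Z i))
    (hindep : ProbabilityTheory.iIndepFun Z P)
    (hgeom : ∀ i k, 1 ≤ k →
      P {ω | Z i ω = k} = ENNReal.ofReal ((1 - q) * q ^ (k - 1)))
    {a n c v : ℕ} (hc : a + n ≤ c) :
    P (Uev Z v c (Finset.Ioc a (a + n)))
      ≤ ENNReal.ofReal (1 - Real.exp (-(q / (1 - q) ^ 2))) := by
  have h1q : (0:ℝ) < 1 - q := by linarith
  set S := Finset.Ioc a (a + n) with hSdef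
  have hSc : ∀ j ∈ S, j ≤ c := by
    intro j hj
    have := (Finset.mem_Ioc.mp hj).2
    omega
  -- complement
  have hcomp : (Uev Z v c S)ᶜ = ⋂ j ∈ S, {ω | Z j ω ≤ v + (c - j) + 1} := by
    ext ω
    simp only [Uev, Set.mem_compl_iff, Set.mem_iUnion, not_exists, Set.mem_iInter,
      Set.mem_setOf_eq]
    constructor
    · intro h j hj
      have := h j hj  -- ¬ (v + (c-j) + 2 ≤ Z j ω) ... need push_neg
      omega
    · intro h j hj
      have := h j hj
      omega
  have hprod : P (⋂ j ∈ S, {ω | Z j ω ≤ v + (c - j) + 1})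
      = ∏ j ∈ S, P {ω | Z j ω ≤ v + (c - j) + 1} := by
    refine hindep.meas_biInter fun j _ => ?_
    exact ⟨Set.Iic (v + (c - j) + 1), measurableSet_Iic, rfl⟩
  have hval : ∀ j ∈ S, P {ω | Z j ω ≤ v + (c - j) + 1}
      = ENNReal.ofReal (1 - q ^ (v + (c - j) + 1)) :=
    fun j _ => le_tail hq0 hq1 hmeas hgeom j _
  -- the real product bound
  have hrb : Real.exp (-(q / (1 - q) ^ 2)) ≤ ∏ j ∈ S, (1 - q ^ (v + (c - j) + 1)) := by
    have hsum : ∑ j ∈ S, q ^ (v + (c - j) + 1) / (1 - q) ≤ q / (1 - q) ^ 2 := by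
      rw [← Finset.sum_div]
      rw [div_le_div_iff₀ h1q (by positivity)]
      have hs1 : ∑ j ∈ S, q ^ (v + (c - j) + 1) ≤ q * (1 / (1 - q)) := by
        have hp : ∀ j ∈ S, q ^ (v + (c - j) + 1) ≤ q * q ^ (c - j) := by
          intro j hj
          rw [← pow_succ']
          exact pow_le_pow_of_le_one hq0.le hq1.le (by omega)
        calc ∑ j ∈ S, q ^ (v + (c - j) + 1) ≤ ∑ j ∈ S, q * q ^ (c - j) :=
              Finset.sum_le_sum hp
          _ = q * ∑ j ∈ S, q ^ (c - j) := by rw [Finset.mul_sum]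
          _ ≤ q * (1 / (1 - q)) :=
              mul_le_mul_of_nonneg_left (sum_pow_sub_le hq0 hq1 S c hSc) hq0.le
      calc (∑ j ∈ S, q ^ (v + (c - j) + 1)) * (1 - q) ^ 2
          ≤ (q * (1 / (1 - q))) * (1 - q) ^ 2 := by
            refine mul_le_mul_of_nonneg_right hs1 (by positivity)
        _ = q * (1 - q) := by field_simp
        _ ≤ q * (1 - q) := le_refl _
    calc Real.exp (-(q / (1 - q) ^ 2))
        ≤ Real.exp (-(∑ j ∈ S, q ^ (v + (c - j) + 1) / (1 - q))) := by
          exact Real.exp_le_exp.mpr (by linarith)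
      _ = ∏ j ∈ S, Real.exp (-(q ^ (v + (c - j) + 1) / (1 - q))) := by
          rw [← Real.exp_sum]
          congr 1
          rw [← Finset.sum_neg_distrib]
      _ ≤ ∏ j ∈ S, (1 - q ^ (v + (c - j) + 1)) := by
          refine Finset.prod_le_prod (fun j _ => (Real.exp_pos _).le) fun j hj => ?_
          refine one_sub_pow_ge hq0 hq1 (pow_pos hq0 _) ?_
          calc q ^ (v + (c - j) + 1) ≤ q ^ 1 :=
                pow_le_pow_of_le_one hq0.le hq1.le (by omega)
            _ = q := pow_one q
  -- assemble
  have hU : MeasurableSet (Uev Z v c S) := measurableSet_Uev hmeas v c S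
  have h1 := measure_compl hU (measure_ne_top P _)
  rw [hcomp, hprod] at h1
  simp only [measure_univ] at h1
  have h2 : P (Uev Z v c S)
      = 1 - ∏ j ∈ S, P {ω | Z j ω ≤ v + (c - j) + 1} := by
    rw [h1, ENNReal.sub_sub_cancel ENNReal.one_ne_top prob_le_one]
  rw [h2, Finset.prod_congr rfl hval, ← ENNReal.ofReal_prod_of_nonneg
    (fun j _ => by nlinarith [pow_le_one₀ hq0.le hq1.le (n := v + (c - j) + 1)])]
  calc 1 - ENNReal.ofReal (∏ j ∈ S, (1 - q ^ (v + (c - j) + 1)))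
      ≤ 1 - ENNReal.ofReal (Real.exp (-(q / (1 - q) ^ 2))) :=
        tsub_le_tsub_left (ENNReal.ofReal_le_ofReal hrb) 1
    _ = ENNReal.ofReal (1 - Real.exp (-(q / (1 - q) ^ 2))) := by
        rw [← ENNReal.ofReal_one, ← ENNReal.ofReal_sub _ (Real.exp_pos _).le]

lemma half_sum (n : ℕ) : ∑ b ∈ Finset.Icc 1 n, (2:ℝ)⁻¹ ^ (n - b) ≤ 2 := by
  induction n with
  | zero => simp
  | succ n ih =>
    rw [Finset.sum_Icc_succ_top (by omega)]
    have h : ∀ b ∈ Finset.Icc 1 n, (2:ℝ)⁻¹ ^ (n + 1 - b) = 2⁻¹ * 2⁻¹ ^ (n - b) := by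
      intro b hb
      have hb' : b ≤ n := (Finset.mem_Icc.mp hb).2
      have he : n + 1 - b = (n - b) + 1 := by omega
      rw [he, pow_succ]
      ring
    rw [Finset.sum_congr rfl h, ← Finset.mul_sum, Nat.sub_self, pow_zero]
    nlinarith [ih]

lemma rho_pow_pred_le {ρ : ℝ} (hρ2 : (1:ℝ)/2 ≤ ρ) (hρpos : 0 < ρ) (n : ℕ) :
    ρ ^ (n - 1) ≤ 2 * ρ ^ n := by
  cases n with
  | zero => simpa using (by linarith : (1:ℝ) ≤ 2)
  | succ m =>
    simp only [Nat.succ_sub_one]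
    rw [pow_succ]
    nlinarith [pow_pos hρpos m]

lemma real_step {q : ℝ} (hq0 : 0 < q) (hq1 : q < 1) {θ ρ : ℝ}
    (hθpos : 0 < θ) (hθ1 : θ ≤ 1) (hρ : ρ = 1 - θ / 2) {L : ℕ}
    (hL1 : 1 ≤ L) (hL2 : q ^ L ≤ ρ / 2)
    (hL3 : q ^ (L + 1) * (4 * L + 1 / (1 - q)) ≤ θ / 2) (n : ℕ) :
    ρ ^ n * (1 - θ) + q ^ ((n + 1) * L + 1) * (1 / (1 - q))
      + ∑ b ∈ Finset.Icc 1 n, ρ ^ (b - 1) * ((L:ℝ) * q ^ ((n + 1 - b) * L + 1))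
      ≤ ρ ^ (n + 1) := by
  have h1q : (0:ℝ) < 1 - q := by linarith
  have hρ2 : (1:ℝ)/2 ≤ ρ := by rw [hρ]; linarith
  have hρpos : (0:ℝ) < ρ := by linarith
  have hρn : (0:ℝ) < ρ ^ n := pow_pos hρpos n
  have hLpos : (0:ℝ) < (L:ℝ) := by exact_mod_cast hL1
  -- T2 bound
  have hT2 : q ^ ((n + 1) * L + 1) * (1 / (1 - q)) ≤ q ^ (L + 1) * (1 / (1 - q)) * ρ ^ n := by
    have he : (n + 1) * L + 1 = (L + 1) + L * n := by ring
    rw [he, pow_add, pow_mul]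
    have hq2 : (q ^ L) ^ n ≤ ρ ^ n :=
      pow_le_pow_left₀ (pow_nonneg hq0.le L) (le_trans hL2 (by linarith)) n
    calc q ^ (L+1) * (q ^ L) ^ n * (1/(1-q)) ≤ q ^ (L+1) * ρ ^ n * (1/(1-q)) := by
          refine mul_le_mul_of_nonneg_right
            (mul_le_mul_of_nonneg_left hq2 (by positivity)) (by positivity)
      _ = q ^ (L + 1) * (1 / (1 - q)) * ρ ^ n := by ring
  -- T3 bound
  have hT3 : ∑ b ∈ Finset.Icc 1 n, ρ ^ (b - 1) * ((L:ℝ) * q ^ ((n + 1 - b) * L + 1))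
      ≤ 4 * L * q ^ (L + 1) * ρ ^ n := by
    have hterm : ∀ b ∈ Finset.Icc 1 n,
        ρ ^ (b - 1) * ((L:ℝ) * q ^ ((n + 1 - b) * L + 1))
          ≤ ((L:ℝ) * q ^ (L + 1) * ρ ^ (n - 1)) * 2⁻¹ ^ (n - b) := by
      intro b hb
      obtain ⟨hb1, hb2⟩ := Finset.mem_Icc.mp hb
      have he : (n + 1 - b) * L + 1 = (L + 1) + L * (n - b) := by
        have h' : n + 1 - b = (n - b) + 1 := by omega
        rw [h']; ring
      rw [he, pow_add, pow_mul]
      have h1 : (q ^ L) ^ (n - b) ≤ ρ ^ (n - b) * 2⁻¹ ^ (n - b) := by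
        calc (q ^ L) ^ (n - b) ≤ (ρ / 2) ^ (n - b) :=
              pow_le_pow_left₀ (pow_nonneg hq0.le L) hL2 _
          _ = ρ ^ (n - b) * 2⁻¹ ^ (n - b) := by
              rw [div_pow, div_eq_mul_inv, ← inv_pow]
      have h3 : ρ ^ (b - 1) * ρ ^ (n - b) = ρ ^ (n - 1) := by
        rw [← pow_add]
        congr 1
        omega
      calc ρ ^ (b - 1) * ((L:ℝ) * (q ^ (L + 1) * (q ^ L) ^ (n - b)))
          ≤ ρ ^ (b - 1) * ((L:ℝ) * (q ^ (L + 1) * (ρ ^ (n - b) * 2⁻¹ ^ (n - b)))) := by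
            refine mul_le_mul_of_nonneg_left ?_ (pow_nonneg hρpos.le _)
            refine mul_le_mul_of_nonneg_left ?_ hLpos.le
            exact mul_le_mul_of_nonneg_left h1 (by positivity)
        _ = ((L:ℝ) * q ^ (L + 1) * (ρ ^ (b - 1) * ρ ^ (n - b))) * 2⁻¹ ^ (n - b) := by ring
        _ = ((L:ℝ) * q ^ (L + 1) * ρ ^ (n - 1)) * 2⁻¹ ^ (n - b) := by rw [h3]
    calc ∑ b ∈ Finset.Icc 1 n, ρ ^ (b - 1) * ((L:ℝ) * q ^ ((n + 1 - b) * L + 1))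
        ≤ ∑ b ∈ Finset.Icc 1 n, ((L:ℝ) * q ^ (L + 1) * ρ ^ (n - 1)) * 2⁻¹ ^ (n - b) :=
          Finset.sum_le_sum hterm
      _ = ((L:ℝ) * q ^ (L + 1) * ρ ^ (n - 1)) * ∑ b ∈ Finset.Icc 1 n, (2:ℝ)⁻¹ ^ (n - b) := by
          rw [← Finset.mul_sum]
      _ ≤ ((L:ℝ) * q ^ (L + 1) * ρ ^ (n - 1)) * 2 :=
          mul_le_mul_of_nonneg_left (half_sum n) (by positivity)
      _ ≤ ((L:ℝ) * q ^ (L + 1) * (2 * ρ ^ n)) * 2 := by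
          refine mul_le_mul_of_nonneg_right
            (mul_le_mul_of_nonneg_left (rho_pow_pred_le hρ2 hρpos n) (by positivity))
            (by norm_num)
      _ = 4 * L * q ^ (L + 1) * ρ ^ n := by ring
  have hc : (1 - θ) + q ^ (L + 1) * (4 * L + 1 / (1 - q)) ≤ ρ := by
    rw [hρ]; linarith
  calc ρ ^ n * (1 - θ) + q ^ ((n + 1) * L + 1) * (1 / (1 - q))
        + ∑ b ∈ Finset.Icc 1 n, ρ ^ (b - 1) * ((L:ℝ) * q ^ ((n + 1 - b) * L + 1))
      ≤ ρ ^ n * (1 - θ) + q ^ (L + 1) * (1 / (1 - q)) * ρ ^ n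
        + 4 * L * q ^ (L + 1) * ρ ^ n := by linarith
    _ = ρ ^ n * ((1 - θ) + q ^ (L + 1) * (4 * L + 1 / (1 - q))) := by ring
    _ ≤ ρ ^ n * ρ := mul_le_mul_of_nonneg_left hc hρn.le
    _ = ρ ^ (n + 1) := (pow_succ ρ n).symm

lemma key (hq0 : 0 < q) (hq1 : q < 1) (hmeas : ∀ i, Measurable (Z i))
    (hindep : ProbabilityTheory.iIndepFun Z P)
    (hgeom : ∀ i k, 1 ≤ k →
      P {ω | Z i ω = k} = ENNReal.ofReal ((1 - q) * q ^ (k - 1)))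
    {θ ρ : ℝ} (hθ : θ = Real.exp (-(q / (1 - q) ^ 2))) (hρ : ρ = 1 - θ / 2)
    {L : ℕ} (hL1 : 1 ≤ L) (hL2 : q ^ L ≤ ρ / 2)
    (hL3 : q ^ (L + 1) * (4 * (L:ℝ) + 1 / (1 - q)) ≤ θ / 2)
    (v t : ℕ) : ∀ r, P (Gev Z v t L r) ≤ ENNReal.ofReal (ρ ^ r) := by
  have h1q : (0:ℝ) < 1 - q := by linarith
  have hθpos : 0 < θ := hθ ▸ Real.exp_pos _
  have hθ1 : θ ≤ 1 := by
    rw [hθ]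
    calc Real.exp (-(q / (1 - q) ^ 2)) ≤ Real.exp 0 := by
          refine Real.exp_le_exp.mpr ?_
          have : 0 ≤ q / (1 - q) ^ 2 := by positivity
          linarith
      _ = 1 := Real.exp_zero
  have hρpos : (0:ℝ) < ρ := by rw [hρ]; linarith
  intro r
  induction r using Nat.strong_induction_on with
  | _ r IH =>
    match r with
    | 0 =>
      have hG : Gev Z v t L 0 = Set.univ := by
        rw [Gev, Finset.Icc_eq_empty (by omega)]
        simp
      rw [hG]
      simp
    | (n + 1) =>
      set c := t + (n + 1) * L with hc
      set E1 : Set Ω :=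
        Gev Z v t L n ∩ Uev Z v c (Finset.Ioc (t + n * L) (t + (n + 1) * L)) with hE1def
      set E2 : Set Ω := Uev Z v c (Finset.Icc 1 t) with hE2def
      set E3 : Set Ω := ⋃ b ∈ Finset.Icc 1 n,
        (Gev Z v t L (b - 1) ∩ Uev Z v c (Finset.Ioc (t + (b - 1) * L) (t + b * L)))
        with hE3def
      have hmul : (n + 1) * L = n * L + L := by ring
      -- covering
      have hcover : Gev Z v t L (n + 1) ⊆ (E1 ∪ E2) ∪ E3 := by
        intro ω hω
        have hmem : ω ∈ Uev Z v (t + (n + 1) * L) (Finset.Icc 1 (t + (n + 1) * L)) := by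
          simp only [Gev, Set.mem_iInter] at hω
          exact hω (n + 1) (Finset.mem_Icc.mpr ⟨by omega, le_refl _⟩)
        simp only [Uev, Set.mem_iUnion] at hmem
        obtain ⟨j, hjmem, hZj⟩ := hmem
        rw [Finset.mem_Icc] at hjmem
        obtain ⟨hj1, hjc⟩ := hjmem
        by_cases hjt : j ≤ t
        · refine Or.inl (Or.inr ?_)
          simp only [hE2def, Uev, Set.mem_iUnion]
          exact ⟨j, Finset.mem_Icc.mpr ⟨hj1, hjt⟩, hZj⟩
        · push_neg at hjt
          have hL0 : 0 < L := hL1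
          obtain ⟨u, hu⟩ : ∃ u, j - t - 1 = u := ⟨_, rfl⟩
          obtain ⟨e, he⟩ : ∃ e, u / L = e := ⟨_, rfl⟩
          have hA1 : e * L ≤ u := he ▸ Nat.div_mul_le_self u L
          have hA2 : u < e * L + L := by
            have hmod := Nat.mod_lt u hL0
            have hdm := Nat.div_add_mod u L
            rw [he] at hdm
            calc u = L * e + u % L := hdm.symm
              _ < L * e + L := by omega
              _ = e * L + L := by rw [Nat.mul_comm]
          have hen : e < n + 1 := by
            rw [← he, Nat.div_lt_iff_lt_mul hL0]
            omega
          by_cases hbe : e = n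
          · -- top block
            refine Or.inl (Or.inl ?_)
            refine ⟨Gev_anti v t L (by omega) hω, ?_⟩
            simp only [Uev, Set.mem_iUnion]
            refine ⟨j, ?_, hZj⟩
            rw [Finset.mem_Ioc]
            rw [hbe] at hA1 hA2
            omega
          · -- inner block b = e + 1 ≤ n
            have hben : e + 1 ≤ n := by omega
            refine Or.inr ?_
            simp only [hE3def, Set.mem_iUnion]
            refine ⟨e + 1, Finset.mem_Icc.mpr ⟨by omega, hben⟩, ?_⟩
            refine ⟨Gev_anti v t L (by omega : e + 1 - 1 ≤ n + 1) hω, ?_⟩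
            simp only [Uev, Set.mem_iUnion]
            refine ⟨j, ?_, hZj⟩
            rw [Finset.mem_Ioc, Nat.add_sub_cancel]
            have hmul2 : (e + 1) * L = e * L + L := by ring
            omega
      -- measure bound pieces
      have hbE1 : P E1 ≤ ENNReal.ofReal (ρ ^ n * (1 - θ)) := by
        have hdisj : Disjoint (Finset.Icc 1 (t + n * L))
            (Finset.Ioc (t + n * L) (t + (n + 1) * L)) := by
          rw [Finset.disjoint_left]
          intro j hj hj'
          rw [Finset.mem_Icc] at hj
          rw [Finset.mem_Ioc] at hj'
          omega
        rw [hE1def, indep_of_depOn hindep hmeas hdisj (depOn_Gev v t L n)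
          (depOn_Uev v c _)]
        have h2 : P (Uev Z v c (Finset.Ioc (t + n * L) (t + (n + 1) * L)))
            ≤ ENNReal.ofReal (1 - Real.exp (-(q / (1 - q) ^ 2))) := by
          have heq : t + (n + 1) * L = (t + n * L) + L := by omega
          rw [heq]
          exact Uev_block_le hq0 hq1 hmeas hindep hgeom (by omega)
        rw [← hθ] at h2
        calc P (Gev Z v t L n) * P (Uev Z v c (Finset.Ioc (t + n * L) (t + (n + 1) * L)))
            ≤ ENNReal.ofReal (ρ ^ n) * ENNReal.ofReal (1 - θ) :=
              mul_le_mul' (IH n (by omega)) h2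
          _ = ENNReal.ofReal (ρ ^ n * (1 - θ)) :=
              (ENNReal.ofReal_mul (pow_nonneg hρpos.le n)).symm
      have hbE2 : P E2 ≤ ENNReal.ofReal (q ^ ((n + 1) * L + 1) * (1 / (1 - q))) := by
        refine le_trans (Uev_sum_le hq0 hq1 hmeas hgeom v c (Finset.Icc 1 t)) ?_
        refine ENNReal.ofReal_le_ofReal ?_
        have hterm : ∀ j ∈ Finset.Icc 1 t,
            q ^ (v + (c - j) + 1) ≤ q ^ ((n + 1) * L + 1) * q ^ (t - j) := by
          intro j hj
          rw [Finset.mem_Icc] at hj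
          rw [← pow_add]
          refine pow_le_pow_of_le_one hq0.le hq1.le ?_
          omega
        calc ∑ j ∈ Finset.Icc 1 t, q ^ (v + (c - j) + 1)
            ≤ ∑ j ∈ Finset.Icc 1 t, q ^ ((n + 1) * L + 1) * q ^ (t - j) :=
              Finset.sum_le_sum hterm
          _ = q ^ ((n + 1) * L + 1) * ∑ j ∈ Finset.Icc 1 t, q ^ (t - j) := by
              rw [Finset.mul_sum]
          _ ≤ q ^ ((n + 1) * L + 1) * (1 / (1 - q)) := by
              refine mul_le_mul_of_nonneg_left ?_ (pow_nonneg hq0.le _)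
              refine sum_pow_sub_le hq0 hq1 _ t ?_
              intro j hj
              exact (Finset.mem_Icc.mp hj).2
      have hbE3 : ∀ b ∈ Finset.Icc 1 n,
          P (Gev Z v t L (b - 1) ∩ Uev Z v c (Finset.Ioc (t + (b - 1) * L) (t + b * L)))
            ≤ ENNReal.ofReal (ρ ^ (b - 1) * ((L:ℝ) * q ^ ((n + 1 - b) * L + 1))) := by
        intro b hb
        rw [Finset.mem_Icc] at hb
        obtain ⟨hb1, hbn⟩ := hb
        have hdisj : Disjoint (Finset.Icc 1 (t + (b - 1) * L))
            (Finset.Ioc (t + (b - 1) * L) (t + b * L)) := by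
          rw [Finset.disjoint_left]
          intro j hj hj'
          rw [Finset.mem_Icc] at hj
          rw [Finset.mem_Ioc] at hj'
          omega
        rw [indep_of_depOn hindep hmeas hdisj (depOn_Gev v t L (b - 1)) (depOn_Uev v c _)]
        have h2 : P (Uev Z v c (Finset.Ioc (t + (b - 1) * L) (t + b * L)))
            ≤ ENNReal.ofReal ((L:ℝ) * q ^ ((n + 1 - b) * L + 1)) := by
          refine le_trans (Uev_sum_le hq0 hq1 hmeas hgeom v c _) ?_
          refine ENNReal.ofReal_le_ofReal ?_
          have hcard : (Finset.Ioc (t + (b - 1) * L) (t + b * L)).card = L := by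
            rw [Nat.card_Ioc]
            have hmul3 : b * L = (b - 1) * L + L := by
              have hb' : b = (b - 1) + 1 := by omega
              calc b * L = ((b - 1) + 1) * L := by rw [← hb']
                _ = (b - 1) * L + L := by ring
            omega
          have hterm : ∀ j ∈ Finset.Ioc (t + (b - 1) * L) (t + b * L),
              q ^ (v + (c - j) + 1) ≤ q ^ ((n + 1 - b) * L + 1) := by
            intro j hj
            rw [Finset.mem_Ioc] at hj
            refine pow_le_pow_of_le_one hq0.le hq1.le ?_
            have hmul4 : (n + 1 - b) * L + b * L = (n + 1) * L := by
              have : (n + 1 - b) + b = n + 1 := by omega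
              calc (n + 1 - b) * L + b * L = ((n + 1 - b) + b) * L := by ring
                _ = (n + 1) * L := by rw [this]
            omega
          calc ∑ j ∈ Finset.Ioc (t + (b - 1) * L) (t + b * L), q ^ (v + (c - j) + 1)
              ≤ ∑ _j ∈ Finset.Ioc (t + (b - 1) * L) (t + b * L), q ^ ((n + 1 - b) * L + 1) :=
                Finset.sum_le_sum hterm
            _ = (L:ℝ) * q ^ ((n + 1 - b) * L + 1) := by
                rw [Finset.sum_const, hcard, nsmul_eq_mul]
        calc P (Gev Z v t L (b - 1)) * P (Uev Z v c (Finset.Ioc (t + (b - 1) * L) (t + b * L)))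
            ≤ ENNReal.ofReal (ρ ^ (b - 1)) * ENNReal.ofReal ((L:ℝ) * q ^ ((n + 1 - b) * L + 1)) :=
              mul_le_mul' (IH (b - 1) (by omega)) h2
          _ = ENNReal.ofReal (ρ ^ (b - 1) * ((L:ℝ) * q ^ ((n + 1 - b) * L + 1))) :=
              (ENNReal.ofReal_mul (pow_nonneg hρpos.le _)).symm
      -- assemble
      calc P (Gev Z v t L (n + 1)) ≤ P ((E1 ∪ E2) ∪ E3) := measure_mono hcover
        _ ≤ P (E1 ∪ E2) + P E3 := measure_union_le _ _
        _ ≤ (P E1 + P E2) + P E3 := by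
            exact add_le_add (measure_union_le _ _) le_rfl
        _ ≤ (ENNReal.ofReal (ρ ^ n * (1 - θ))
              + ENNReal.ofReal (q ^ ((n + 1) * L + 1) * (1 / (1 - q))))
            + ∑ b ∈ Finset.Icc 1 n,
                ENNReal.ofReal (ρ ^ (b - 1) * ((L:ℝ) * q ^ ((n + 1 - b) * L + 1))) := by
            refine add_le_add (add_le_add hbE1 hbE2) ?_
            refine le_trans (measure_biUnion_finset_le _ _) ?_
            exact Finset.sum_le_sum hbE3
        _ = ENNReal.ofReal (ρ ^ n * (1 - θ) + q ^ ((n + 1) * L + 1) * (1 / (1 - q))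
              + ∑ b ∈ Finset.Icc 1 n, ρ ^ (b - 1) * ((L:ℝ) * q ^ ((n + 1 - b) * L + 1))) := by
            have hA : (0:ℝ) ≤ ρ ^ n * (1 - θ) :=
              mul_nonneg (pow_nonneg hρpos.le n) (by linarith)
            have hB : (0:ℝ) ≤ q ^ ((n + 1) * L + 1) * (1 / (1 - q)) :=
              mul_nonneg (pow_nonneg hq0.le _) (one_div_nonneg.mpr h1q.le)
            have hterm3 : ∀ b ∈ Finset.Icc 1 n,
                (0:ℝ) ≤ ρ ^ (b - 1) * ((L:ℝ) * q ^ ((n + 1 - b) * L + 1)) := fun b _ =>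
              mul_nonneg (pow_nonneg hρpos.le _)
                (mul_nonneg (Nat.cast_nonneg L) (pow_nonneg hq0.le _))
            rw [← ENNReal.ofReal_sum_of_nonneg hterm3,
              ← ENNReal.ofReal_add hA hB,
              ← ENNReal.ofReal_add (add_nonneg hA hB) (Finset.sum_nonneg hterm3)]
        _ ≤ ENNReal.ofReal (ρ ^ (n + 1)) := by
            refine ENNReal.ofReal_le_ofReal ?_
            exact real_step hq0 hq1 hθpos hθ1 hρ hL1 hL2 hL3 n

end RTETaux

/-- **Exponential tails for return times (Proposition 4.7).** For the chain
`M_n = max(M_{n-1}, Z_n) - 1` driven by i.i.d. Geometric(1-q) variables, there exist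
`A = A(q) > 0` and `c = c(q) > 0` such that for all integers `t ≥ 0` and reals `s ≥ 0`,
`P_t(R_0^+ > 10 t + s) ≤ A e^{-c s}`, and more generally for all `v ≥ 0`,
`P_{t+v}(R_v^+ > 10 t + s) ≤ A e^{-c s}`. -/
theorem return_time_exponential_tail
    {Ω : Type*} [MeasurableSpace Ω] (P : Measure Ω) [IsProbabilityMeasure P]
    (q : ℝ) (hq0 : 0 < q) (hq1 : q < 1)
    (Z : ℕ → Ω → ℕ)
    (hmeas : ∀ i, Measurable (Z i))
    (hindep : ProbabilityTheory.iIndepFun Z P)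
    (hpos : ∀ i ω, 1 ≤ Z i ω)
    (hgeom : ∀ i k, 1 ≤ k →
      P {ω | Z i ω = k} = ENNReal.ofReal ((1 - q) * q ^ (k - 1))) :
    ∃ A > (0 : ℝ), ∃ c > (0 : ℝ),
      (∀ t : ℕ, ∀ s : ℝ, 0 ≤ s →
        P {ω | ENNReal.ofReal (10 * t + s)
            < retTimeZero (chainM t (fun n => Z n ω))}
          ≤ ENNReal.ofReal (A * Real.exp (-c * s)))
      ∧ ∀ v t : ℕ, ∀ s : ℝ, 0 ≤ s →
          P {ω | ENNReal.ofReal (10 * t + s)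
              < retTimeLe (chainM (t + v) (fun n => Z n ω)) v}
            ≤ ENNReal.ofReal (A * Real.exp (-c * s)) := by
  classical
  have h1q : (0:ℝ) < 1 - q := by linarith
  set θ : ℝ := Real.exp (-(q / (1 - q) ^ 2)) with hθ
  set ρ : ℝ := 1 - θ / 2 with hρ
  have hθpos : 0 < θ := Real.exp_pos _
  have hθ1 : θ ≤ 1 := by
    rw [hθ]
    calc Real.exp (-(q / (1 - q) ^ 2)) ≤ Real.exp 0 := by
          refine Real.exp_le_exp.mpr ?_
          have h' : 0 ≤ q / (1 - q) ^ 2 := by positivity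
          linarith
      _ = 1 := Real.exp_zero
  have hρpos : 0 < ρ := by rw [hρ]; linarith
  have hρlt1 : ρ < 1 := by rw [hρ]; linarith
  -- choose the block length L
  have t1 : Filter.Tendsto (fun L : ℕ => (L:ℝ) * q ^ L) Filter.atTop (nhds 0) := by
    have h := tendsto_pow_const_mul_const_pow_of_abs_lt_one 1
      (show |q| < 1 by rwa [abs_of_pos hq0])
    simpa using h
  have t2 : Filter.Tendsto (fun L : ℕ => q ^ L) Filter.atTop (nhds 0) :=
    tendsto_pow_atTop_nhds_zero_of_lt_one hq0.le hq1
  have htend : Filter.Tendsto (fun L : ℕ => q ^ (L + 1) * (4 * (L:ℝ) + 1 / (1 - q)))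
      Filter.atTop (nhds 0) := by
    have heq : (fun L : ℕ => q ^ (L + 1) * (4 * (L:ℝ) + 1 / (1 - q)))
        = fun L : ℕ => (4 * q) * ((L:ℝ) * q ^ L) + ((1 / (1 - q)) * q) * q ^ L := by
      funext L
      rw [pow_succ]
      ring
    rw [heq]
    have h := (t1.const_mul (4 * q)).add (t2.const_mul ((1 / (1 - q)) * q))
    simpa using h
  have hev : ∀ᶠ L : ℕ in Filter.atTop,
      q ^ L ≤ ρ / 2 ∧ q ^ (L + 1) * (4 * (L:ℝ) + 1 / (1 - q)) ≤ θ / 2 ∧ 1 ≤ L := by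
    filter_upwards [t2.eventually_lt_const (show (0:ℝ) < ρ / 2 by positivity),
      htend.eventually_lt_const (show (0:ℝ) < θ / 2 by positivity),
      Filter.eventually_ge_atTop 1] with L hA hB hC
    exact ⟨hA.le, hB.le, hC⟩
  obtain ⟨L, hL2, hL3, hL1⟩ := hev.exists
  have hLpos : (0:ℝ) < (L:ℝ) := by exact_mod_cast hL1
  have hlog : Real.log ρ < 0 := Real.log_neg hρpos hρlt1
  -- the general bound
  have hmain : ∀ v t : ℕ, ∀ s : ℝ, 0 ≤ s →
      P {ω | ENNReal.ofReal (10 * t + s)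
          < retTimeLe (chainM (t + v) (fun n => Z n ω)) v}
        ≤ ENNReal.ofReal ((1 / ρ) * Real.exp (-((-Real.log ρ) / L) * s)) := by
    intro v t s hs
    set nn := ⌊s⌋₊ with hnn
    set r := nn / L with hrr
    have hsub : {ω | ENNReal.ofReal (10 * t + s)
        < retTimeLe (chainM (t + v) (fun n => Z n ω)) v} ⊆ RTETaux.Gev Z v t L r := by
      intro ω hω
      simp only [Set.mem_setOf_eq] at hω
      simp only [RTETaux.Gev, Set.mem_iInter]
      intro i hi
      rw [Finset.mem_Icc] at hi
      by_contra hnot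
      have hall : ∀ j, 1 ≤ j → j ≤ t + i * L → Z j ω ≤ v + (t + i * L - j) + 1 := by
        intro j hj1 hj2
        by_contra hzj
        refine hnot ?_
        simp only [RTETaux.Uev, Set.mem_iUnion, Set.mem_setOf_eq]
        exact ⟨j, Finset.mem_Icc.mpr ⟨hj1, hj2⟩, by omega⟩
      have hMle : chainM (t + v) (fun m => Z m ω) (t + i * L) ≤ v := by
        rw [RTETaux.chainM_le_iff]
        exact ⟨by omega, hall⟩
      have hpos' : 0 < t + i * L := by
        have h' : 0 < i * L := Nat.mul_pos (by omega) (by omega)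
        omega
      have hretle : retTimeLe (chainM (t + v) (fun m => Z m ω)) v
          ≤ ((t + i * L : ℕ) : ℝ≥0∞) := by
        refine iInf_le_of_le (t + i * L) ?_
        exact iInf_le_of_le ⟨hpos', hMle⟩ le_rfl
      have hcast : ((t + i * L : ℕ) : ℝ≥0∞) ≤ ENNReal.ofReal (10 * t + s) := by
        rw [← ENNReal.ofReal_natCast]
        refine ENNReal.ofReal_le_ofReal ?_
        have h1 : i * L ≤ nn := by
          calc i * L ≤ r * L := Nat.mul_le_mul_right L hi.2
            _ ≤ nn := Nat.div_mul_le_self nn L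
        have h3 : (nn : ℝ) ≤ s := Nat.floor_le hs
        have h4 : (0:ℝ) ≤ (t:ℝ) := Nat.cast_nonneg t
        have h2 : ((t + i * L : ℕ) : ℝ) ≤ (t : ℝ) + (nn : ℝ) := by
          push_cast
          have h5 : ((i * L : ℕ) : ℝ) ≤ (nn : ℝ) := by exact_mod_cast h1
          push_cast at h5
          linarith
        calc ((t + i * L : ℕ) : ℝ) ≤ (t:ℝ) + (nn:ℝ) := h2
          _ ≤ 10 * t + s := by linarith
      exact absurd (lt_of_lt_of_le hω hretle) (not_lt.mpr hcast)
    calc P {ω | ENNReal.ofReal (10 * t + s)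
          < retTimeLe (chainM (t + v) (fun n => Z n ω)) v}
        ≤ P (RTETaux.Gev Z v t L r) := measure_mono hsub
      _ ≤ ENNReal.ofReal (ρ ^ r) :=
          RTETaux.key hq0 hq1 hmeas hindep hgeom hθ hρ hL1 hL2 hL3 v t r
      _ ≤ ENNReal.ofReal ((1 / ρ) * Real.exp (-((-Real.log ρ) / L) * s)) := by
          refine ENNReal.ofReal_le_ofReal ?_
          have hexp : Real.exp (-((-Real.log ρ) / L) * s) = ρ ^ (s / (L:ℝ)) := by
            rw [Real.rpow_def_of_pos hρpos]
            congr 1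
            field_simp
          have hsL : s / (L:ℝ) - 1 ≤ (r : ℝ) := by
            have hs1 : s < (nn:ℝ) + 1 := by
              have h' := Nat.lt_floor_add_one s
              push_cast at h' ⊢
              exact_mod_cast h'
            have h5 : nn < (r + 1) * L := by
              have hdm := Nat.div_add_mod nn L
              rw [← hrr] at hdm
              have hmod := Nat.mod_lt nn (show 0 < L by omega)
              have hm2 : (r + 1) * L = L * r + L := by ring
              omega
            have h6 : (nn:ℝ) + 1 ≤ ((r:ℝ) + 1) * (L:ℝ) := by exact_mod_cast h5
            rw [sub_le_iff_le_add, div_le_iff₀ hLpos]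
            calc s ≤ (nn:ℝ) + 1 := hs1.le
              _ ≤ ((r:ℝ) + 1) * (L:ℝ) := h6
          have h7 : ρ ^ ((r:ℕ):ℝ) ≤ ρ ^ (s / (L:ℝ) - 1) :=
            Real.rpow_le_rpow_of_exponent_ge hρpos hρlt1.le hsL
          have h8 : ρ ^ (s / (L:ℝ) - 1) = ρ ^ (s / (L:ℝ)) / ρ := by
            rw [Real.rpow_sub hρpos, Real.rpow_one]
          rw [hexp, ← Real.rpow_natCast ρ r]
          rw [h8] at h7
          calc ρ ^ ((r:ℕ):ℝ) ≤ ρ ^ (s / (L:ℝ)) / ρ := h7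
            _ = (1 / ρ) * ρ ^ (s / (L:ℝ)) := by ring
  refine ⟨1 / ρ, by positivity, (-Real.log ρ) / L, div_pos (by linarith) hLpos, ?_, hmain⟩
  intro t s hs
  have hset : {ω | ENNReal.ofReal (10 * t + s)
      < retTimeZero (chainM t (fun n => Z n ω))}
      = {ω | ENNReal.ofReal (10 * t + s)
      < retTimeLe (chainM (t + 0) (fun n => Z n ω)) 0} := by
    ext ω
    simp only [Set.mem_setOf_eq, retTimeZero, retTimeLe, Nat.le_zero, Nat.add_zero]
  rw [hset]
  exact hmain 0 t s hs

end
end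

section
/- Let (z_i)_{i≥1} be a sequence of positive integers, let m ≥ 0, and define M_0 = m, M_t = max(M_{t-1}, z_t) - 1 for t ≥ 1. Fix integers 0 < ℓ_1 < ℓ_2 < ... < ℓ_k such that M_{ℓ_i} = M_{ℓ_i - 1} - 1 for all 1 ≤ i ≤ k, and let S = {ℓ_1,...,ℓ_k}. Let f(i) be the i-th element of {1,2,...} \ S in increasing order, and define the censored chain by M'_0 = m, M'_t = max(M'_{t-1}, z_{f(t)}) - 1 for t ≥ 1. Then min_{1 ≤ t ≤ ℓ_k - k} M'_t ≥ min_{1 ≤ t ≤ ℓ_k} M_t. -/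
/-- **Censoring down-steps raises the running minimum (Lemma 6.4).** Let `(z_i)_{i≥1}`
be positive integers, `m ≥ 0`, and `M` the chain started at `m`. Fix times
`0 < ℓ_0 < ℓ_1 < ⋯ < ℓ_k` (so `k + 1` of them) at which the chain moves down by one:
`M_{ℓ_i} = M_{ℓ_i - 1} - 1`. Let `M'` be the chain started at `m` driven by the
subsequence of `(z_i)_{i≥1}` obtained by deleting the entries with indices in
`S = {ℓ_0, ..., ℓ_k}` (the `t`-th driving value of `M'` is `z_{f(t)}`, where `f(t)` is
the `t`-th element of `{1,2,...} \ S` in increasing order). Then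
`min_{1 ≤ t ≤ ℓ_k - (k+1)} M'_t ≥ min_{1 ≤ t ≤ ℓ_k} M_t`
(the minima taken in `ℕ∞`, so an empty minimum is `⊤`). -/
theorem censoring_raises_running_min
    (z : ℕ → ℕ) (hz : ∀ i, 1 ≤ z i) (m : ℕ)
    (k : ℕ) (ℓ : Fin (k + 1) → ℕ) (hℓpos : ∀ i, 0 < ℓ i) (hmono : StrictMono ℓ)
    (hdown : ∀ i, chainM m z (ℓ i) = chainM m z (ℓ i - 1) - 1) :
    (Finset.Icc 1 (ℓ (Fin.last k))).inf (fun t => (chainM m z t : ℕ∞))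
      ≤ (Finset.Icc 1 (ℓ (Fin.last k) - (k + 1))).inf
          (fun t =>
            (chainM m
              (fun t' => z (Nat.nth (fun a => 1 ≤ a ∧ ∀ i, ℓ i ≠ a) (t' - 1))) t : ℕ∞)) := by
  classical
  set p : ℕ → Prop := fun a => 1 ≤ a ∧ ∀ i, ℓ i ≠ a with hp
  set L := ℓ (Fin.last k) with hL
  -- p is infinite
  have hpinf : (setOf p).Infinite := by
    apply Set.Infinite.mono (s := Set.Ioi L)
    · intro a ha
      simp only [Set.mem_Ioi] at ha
      refine ⟨by omega, fun i hi => ?_⟩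
      have : ℓ i ≤ L := by
        rcases eq_or_lt_of_le (Fin.le_last i) with h | h
        · rw [h]
        · exact le_of_lt (hmono h)
      omega
    · exact Set.Ioi_infinite L
  -- a down step decreases the chain
  have hdec : ∀ j : ℕ, 1 ≤ j → (∃ i, ℓ i = j) → chainM m z j ≤ chainM m z (j - 1) := by
    rintro j hj ⟨i, rfl⟩
    rw [hdown i]
    omega
  -- a run of down steps is non-increasing
  have run : ∀ b a : ℕ, a ≤ b → (∀ j, a < j → j ≤ b → ∃ i, ℓ i = j) →
      chainM m z b ≤ chainM m z a := by
    intro b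
    induction b with
    | zero =>
      intro a ha _
      have : a = 0 := by omega
      simp [this]
    | succ b ih =>
      intro a ha hj
      rcases eq_or_lt_of_le ha with h | h
      · rw [h]
      · have h1 : chainM m z (b + 1) ≤ chainM m z b := by
          have := hdec (b + 1) (by omega) (hj (b + 1) h (le_refl _))
          simpa using this
        exact le_trans h1 (ih a (by omega) (fun j hja hjb => hj j hja (by omega)))
  -- indices strictly between consecutive nth values (or below nth 0) don't satisfy p
  have hgap : ∀ t j : ℕ, (if t = 0 then 0 else Nat.nth p (t - 1)) < j → j < Nat.nth p t →
      ¬ p j := by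
    intro t j hjl hjr hpj
    have hcount : Nat.count p j < t := by
      by_contra hc
      push_neg at hc
      have := (Nat.nth_le_nth hpinf).2 hc
      rw [Nat.nth_count hpj] at this
      omega
    cases t with
    | zero => omega
    | succ s =>
      have hle : Nat.count p j ≤ s := by omega
      have := (Nat.nth_le_nth hpinf).2 hle
      rw [Nat.nth_count hpj] at this
      simp only [Nat.succ_ne_zero, if_false, Nat.add_sub_cancel] at hjl
      omega
  set g : ℕ → ℕ := fun t => if t = 0 then 0 else Nat.nth p (t - 1) with hg
  have hgpos : ∀ t, 1 ≤ Nat.nth p t := fun t => (Nat.nth_mem_of_infinite hpinf t).1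
  have hglt : ∀ t, g t < Nat.nth p t := by
    intro t
    cases t with
    | zero => show 0 < Nat.nth p 0; exact hgpos 0
    | succ s =>
      simp only [hg, Nat.succ_ne_zero, if_false, Nat.add_sub_cancel]
      exact (Nat.nth_lt_nth hpinf).2 (Nat.lt_succ_self s)
  -- the key coupling: the censored chain dominates the original chain at censored-enumeration times
  have key : ∀ t, chainM m z (g t) ≤ chainM m (fun t' => z (Nat.nth p (t' - 1))) t := by
    intro t
    induction t with
    | zero => simp [hg, chainM]
    | succ t ih =>
      have hgt1 : g (t + 1) = Nat.nth p t := by simp [hg]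
      have hpos : 1 ≤ Nat.nth p t := hgpos t
      -- chain value at (nth p t) - 1 is ≤ chain value at g t
      have hrun : chainM m z (Nat.nth p t - 1) ≤ chainM m z (g t) := by
        apply run
        · have := hglt t; omega
        · intro j hja hjb
          have hnp : ¬ p j := hgap t j hja (by omega)
          simp only [hp, not_and, not_forall, not_not] at hnp
          exact hnp (by omega)
      have hstep : chainM m z (Nat.nth p t) =
          max (chainM m z (Nat.nth p t - 1)) (z (Nat.nth p t)) - 1 := by
        obtain ⟨n, hn⟩ : ∃ n, Nat.nth p t = n + 1 := ⟨Nat.nth p t - 1, by omega⟩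
        rw [hn]
        simp [chainM]
      rw [hgt1, hstep]
      have : chainM m (fun t' => z (Nat.nth p (t' - 1))) (t + 1) =
          max (chainM m (fun t' => z (Nat.nth p (t' - 1))) t) (z (Nat.nth p t)) - 1 := by
        simp [chainM]
      rw [this]
      have hmax : max (chainM m z (Nat.nth p t - 1)) (z (Nat.nth p t)) ≤
          max (chainM m (fun t' => z (Nat.nth p (t' - 1))) t) (z (Nat.nth p t)) :=
        max_le_max (le_trans hrun ih) (le_refl _)
      omega
  -- counting: nth p n ≤ L for n < L - (k+1)
  have hcountL : L - (k + 1) ≤ Nat.count p (L + 1) := by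
    rw [Nat.count_eq_card_filter_range]
    have hsub : (Finset.Icc 1 L) \ (Finset.image ℓ Finset.univ) ⊆
        (Finset.range (L + 1)).filter p := by
      intro a ha
      simp only [Finset.mem_sdiff, Finset.mem_Icc, Finset.mem_image, Finset.mem_univ,
        true_and, not_exists, Finset.mem_filter, Finset.mem_range] at ha ⊢
      exact ⟨by omega, ha.1.1, fun i => ha.2 i⟩
    calc L - (k + 1) ≤ (Finset.Icc 1 L).card - (Finset.image ℓ Finset.univ).card := by
          rw [Nat.card_Icc]
          have : (Finset.image ℓ Finset.univ).card ≤ k + 1 := by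
            apply le_trans (Finset.card_image_le)
            simp
          omega
      _ ≤ ((Finset.Icc 1 L) \ (Finset.image ℓ Finset.univ)).card :=
          Finset.le_card_sdiff _ _
      _ ≤ _ := Finset.card_le_card hsub
  -- main argument
  apply Finset.le_inf
  intro t ht
  simp only [Finset.mem_Icc] at ht
  have hnth_le : Nat.nth p (t - 1) ≤ L := by
    have h1 : t - 1 < Nat.count p (L + 1) := by omega
    have := Nat.nth_lt_of_lt_count h1
    omega
  have hmem : Nat.nth p (t - 1) ∈ Finset.Icc 1 L := by
    simp only [Finset.mem_Icc]
    exact ⟨hgpos (t - 1), hnth_le⟩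
  calc (Finset.Icc 1 L).inf (fun t => (chainM m z t : ℕ∞))
      ≤ (chainM m z (Nat.nth p (t - 1)) : ℕ∞) := Finset.inf_le hmem
    _ ≤ _ := by
        have hk := key t
        have hgt : g t = Nat.nth p (t - 1) := by
          simp only [hg]
          rw [if_neg (by omega)]
        rw [hgt] at hk
        exact_mod_cast hk
end
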